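/- Let S ⊆ ℝⁿ be a nonempty compact C^{1,1}-hypersurface: S = ∂Ω for an open set Ω such that around each boundary point, in a suitable orthonormal frame, ∂Ω is the graph of a C¹ function φ : D_r(0') → (−a, a) with φ(0') = 0, ∇φ(0') = 0, and both φ and ∇φ L-Lipschitz, with Ω lying below the graph. Then there exists ε > 0 such that Ω satisfies the ε-ball condition. -/
import Mathlib
open Metric
open scoped RealInnerProductSpace

lemma key_real (E q U D L : ℝ) (hE : 0 < E) (hU : 0 ≤ U) (hL : 0 ≤ L)
    (hLE : 2*L*E ≤ 1) (h : (D + E)^2 < E^2 - U + 2*E*q) : D < q - L*U := by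
  have h2 : 0 < E + q - L*U := by
    nlinarith [sq_nonneg (D + E), mul_nonneg hU (by linarith : (0:ℝ) ≤ 1 - 2*L*E)]
  by_contra hc
  push_neg at hc
  nlinarith [mul_nonneg hU (by linarith : (0:ℝ) ≤ 1 - 2*L*E), sq_nonneg (q - L*U)]

section
variable {E : Type*} [NormedAddCommGroup E] [InnerProductSpace ℝ E]

lemma taylor_est (dv : E) (r L : ℝ) (hL : 0 ≤ L) (φ : E → ℝ) (G : E → E)
    (hder : ∀ z, ⟪z, dv⟫ = 0 → ‖z‖ < r →
      HasFDerivWithinAt φ (innerSL ℝ (G z)) {w : E | ⟪w, dv⟫ = 0} z)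
    (hlip : ∀ z w, ⟪z, dv⟫ = 0 → ⟪w, dv⟫ = 0 → ‖z‖ < r → ‖w‖ < r →
      ‖G z - G w‖ ≤ L * ‖z - w‖)
    (v w : E) (hv : ⟪v, dv⟫ = 0) (hw : ⟪w, dv⟫ = 0) (hvr : ‖v‖ < r) (hwr : ‖w‖ < r) :
    |φ w - φ v - ⟪G v, w - v⟫| ≤ L * ‖w - v‖ * ‖w - v‖ := by
  set S := segment ℝ v w with hS
  have hSsub : S ⊆ {w : E | ⟪w, dv⟫ = 0} := by
    rintro z ⟨α, β, hα, hβ, hαβ, rfl⟩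
    simp only [Set.mem_setOf_eq, inner_add_left, real_inner_smul_left, hv, hw]
    ring
  have hSball : S ⊆ ball (0 : E) r := by
    apply (convex_ball (0:E) r).segment_subset <;> simpa [mem_ball_zero_iff]
  have hSnear : ∀ z ∈ S, ‖z - v‖ ≤ ‖w - v‖ := by
    rintro z ⟨α, β, hα, hβ, hαβ, rfl⟩
    have h1 : α • v + β • w - v = β • (w - v) := by
      rw [show α = 1 - β by linarith]; module
    rw [h1, norm_smul, Real.norm_eq_abs, abs_of_nonneg hβ]
    nlinarith [norm_nonneg (w - v)]
  have key := Convex.norm_image_sub_le_of_norm_hasFDerivWithin_le'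
    (f := φ) (f' := fun z => innerSL ℝ (G z)) (φ := innerSL ℝ (G v))
    (C := L * ‖w - v‖) (s := S)
    (fun z hz => (hder z (hSsub hz) (by simpa [mem_ball_zero_iff] using hSball hz)).mono hSsub)
    (fun z hz => by
      rw [← map_sub, innerSL_apply_norm]
      calc ‖G z - G v‖ ≤ L * ‖z - v‖ :=
            hlip z v (hSsub hz) hv (by simpa [mem_ball_zero_iff] using hSball hz) hvr
        _ ≤ L * ‖w - v‖ := mul_le_mul_of_nonneg_left (hSnear z hz) hL)
    (convex_segment v w) (left_mem_segment ℝ v w) (right_mem_segment ℝ v w)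
  simpa [Real.norm_eq_abs] using key

set_option maxHeartbeats 1000000 in
lemma local_ball (T : Set E) (x₀ dv : E) (a r L ε : ℝ) (φ : E → ℝ) (G : E → E)
    (hdv : ‖dv‖ = 1) (hL : 0 < L) (hφ0 : φ 0 = 0)
    (hg : ∀ z, ⟪z, dv⟫ = 0 → ‖z‖ < r → ⟪G z, dv⟫ = 0)
    (hder : ∀ z, ⟪z, dv⟫ = 0 → ‖z‖ < r →
      HasFDerivWithinAt φ (innerSL ℝ (G z)) {w : E | ⟪w, dv⟫ = 0} z)
    (hlipφ : ∀ z w, ⟪z, dv⟫ = 0 → ⟪w, dv⟫ = 0 → ‖z‖ < r → ‖w‖ < r →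
      |φ z - φ w| ≤ L * ‖z - w‖)
    (hlipG : ∀ z w, ⟪z, dv⟫ = 0 → ⟪w, dv⟫ = 0 → ‖z‖ < r → ‖w‖ < r →
      ‖G z - G w‖ ≤ L * ‖z - w‖)
    (hmem : ∀ w t, ⟪w, dv⟫ = 0 → ‖w‖ < r → t ∈ Set.Ioo (-a) a → t < φ w →
      x₀ + w + t • dv ∈ T)
    (v : E) (hv : ⟪v, dv⟫ = 0) (hε : 0 < ε) (hLε : 2*L*ε ≤ 1)
    (hr2 : ‖v‖ + 2*ε < r) (ha2 : L*‖v‖ + 2*ε < a) :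
    ball (x₀ + v + φ v • dv - ε • (‖dv - G v‖⁻¹ • (dv - G v))) ε ⊆ T := by
  intro p hp
  have hvr : ‖v‖ < r := by nlinarith
  set g := G v with hgdef
  set s := ‖dv - g‖ with hsdef
  have hgdv : ⟪g, dv⟫ = 0 := hg v hv hvr
  have hs2 : s^2 = 1 + ‖g‖^2 := by
    rw [hsdef, norm_sub_sq_real, hdv, real_inner_comm, hgdv]; ring
  have hs1 : 1 ≤ s := by nlinarith [norm_nonneg (dv - g), norm_nonneg g]
  have hspos : 0 < s := by linarith
  have hgs : ‖g‖ ≤ s := by nlinarith [norm_nonneg g]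
  -- decompose p
  set t := ⟪p - x₀, dv⟫ with htdef
  set w := p - x₀ - t • dv with hwdef
  have hwdv : ⟪w, dv⟫ = 0 := by
    rw [hwdef, inner_sub_left, real_inner_smul_left, real_inner_self_eq_norm_sq, hdv]
    ring
  have hp_eq : p = x₀ + w + t • dv := by rw [hwdef]; abel
  set u := w - v with hudef
  have hudv : ⟪u, dv⟫ = 0 := by rw [hudef, inner_sub_left, hwdv, hv]; ring
  -- orthogonal decomposition of the norm
  have horth : ∀ (z : E) (τ : ℝ), ⟪z, dv⟫ = 0 → ‖z + τ • dv‖^2 = ‖z‖^2 + τ^2 := by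
    intro z τ hz
    rw [norm_add_sq_real, real_inner_smul_right, hz, norm_smul, hdv]
    simp [mul_pow, sq_abs]
  have hc : p - (x₀ + v + φ v • dv - ε • (s⁻¹ • (dv - g)))
      = (u - (ε/s) • g) + (t - (φ v - ε/s)) • dv := by
    rw [hp_eq, hudef, smul_smul, show ε * s⁻¹ = ε/s by rw [div_eq_mul_inv]]
    module
  have hudvg : ⟪u - (ε/s) • g, dv⟫ = 0 := by
    rw [inner_sub_left, real_inner_smul_left, hudv, hgdv]; ring
  have hball : ‖u - (ε/s) • g‖^2 + (t - φ v + ε/s)^2 < ε^2 := by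
    have h1 : ‖p - (x₀ + v + φ v • dv - ε • (s⁻¹ • (dv - g)))‖ < ε := by
      rw [← dist_eq_norm]; exact mem_ball.mp hp
    have h2 := horth (u - (ε/s) • g) (t - (φ v - ε/s)) hudvg
    have h3 : ‖p - (x₀ + v + φ v • dv - ε • (s⁻¹ • (dv - g)))‖^2 < ε^2 := by
      nlinarith [norm_nonneg (p - (x₀ + v + φ v • dv - ε • (s⁻¹ • (dv - g))))]
    rw [hc, h2] at h3
    have h4 : (t - (φ v - ε/s))^2 = (t - φ v + ε/s)^2 := by ring
    rw [h4] at h3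
    exact h3
  have hexp : ‖u - (ε/s) • g‖^2 = ‖u‖^2 - 2*(ε/s)*⟪g,u⟫ + (ε/s)^2*‖g‖^2 := by
    rw [norm_sub_sq_real, real_inner_smul_right, norm_smul, Real.norm_eq_abs,
      abs_of_nonneg (by positivity : (0:ℝ) ≤ ε/s), real_inner_comm u g]
    ring
  have hεs : 0 < ε/s := by positivity
  have hεsle : ε/s ≤ ε := div_le_self hε.le hs1
  -- bound ‖u‖ and ‖w‖
  have hu1 : ‖u - (ε/s) • g‖ < ε := by
    refine lt_of_pow_lt_pow_left₀ 2 hε.le ?_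
    have := sq_nonneg (t - φ v + ε/s)
    linarith
  have hu2 : ‖(ε/s) • g‖ ≤ ε := by
    rw [norm_smul, Real.norm_eq_abs, abs_of_nonneg hεs.le]
    calc (ε/s) * ‖g‖ ≤ (ε/s) * s := mul_le_mul_of_nonneg_left hgs hεs.le
      _ = ε := div_mul_cancel₀ ε hspos.ne'
  have hu : ‖u‖ < 2*ε := by
    calc ‖u‖ ≤ ‖u - (ε/s) • g‖ + ‖(ε/s) • g‖ := by
          simpa using norm_add_le (u - (ε/s) • g) ((ε/s) • g)
      _ < 2*ε := by linarith
  have hwr : ‖w‖ < r := by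
    have h4 : v + u = w := by rw [hudef]; abel
    calc ‖w‖ = ‖v + u‖ := by rw [h4]
      _ ≤ ‖v‖ + ‖u‖ := norm_add_le _ _
      _ < r := by linarith
  -- bound |φ v|
  have hφv : |φ v| ≤ L * ‖v‖ := by
    have h0r : ‖(0:E)‖ < r := by
      rw [norm_zero]; exact lt_of_le_of_lt (norm_nonneg v) hvr
    have h0dv : ⟪(0:E), dv⟫ = 0 := inner_zero_left dv
    have := hlipφ v 0 hv h0dv hvr h0r
    simpa [hφ0] using this
  -- bound t
  have htD : (t - φ v + ε/s)^2 < ε^2 := by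
    have := sq_nonneg (‖u - (ε/s) • g‖)
    linarith
  have htabs : |t - φ v + ε/s| < ε := by
    have h12 := Real.sqrt_lt_sqrt (sq_nonneg (t - φ v + ε/s)) htD
    rwa [Real.sqrt_sq_eq_abs, Real.sqrt_sq hε.le] at h12
  have htIoo : t ∈ Set.Ioo (-a) a := by
    rcases abs_lt.mp htabs with ⟨h5, h6⟩
    rcases abs_le.mp hφv with ⟨h7, h8⟩
    constructor <;> nlinarith [norm_nonneg v]
  -- key inequality
  have hkr : (t - φ v + ε/s)^2 < (ε/s)^2 - ‖u‖^2 + 2*(ε/s)*⟪g,u⟫ := by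
    have h3 : (ε/s)^2 + (ε/s)^2*‖g‖^2 = ε^2 := by
      have hes : (ε/s)^2 * s^2 = ε^2 := by field_simp
      rw [← hes, hs2]; ring
    rw [hexp] at hball
    linarith
  have hkey := key_real (ε/s) ⟪g,u⟫ (‖u‖^2) (t - φ v) L hεs (sq_nonneg _) hL.le
    (by nlinarith [mul_le_mul_of_nonneg_left hεsle (show (0:ℝ) ≤ 2*L by positivity)]) hkr
  -- Taylor
  have htay := taylor_est dv r L hL.le φ G hder hlipG v w hv hwdv hvr hwr
  rw [← hudef] at htay
  rcases abs_le.mp htay with ⟨h10, h11⟩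
  have htlt : t < φ w := by nlinarith [sq_nonneg ‖u‖]
  rw [hp_eq]
  exact hmem w t hwdv hwr htIoo htlt

lemma ball_shrink_sub (T : Set E) (x d : E) (hd : ‖d‖ = 1) {ε ε₀ : ℝ}
    (hε : 0 < ε) (hle : ε ≤ ε₀) (hb : ball (x - ε₀ • d) ε₀ ⊆ T) :
    ball (x - ε • d) ε ⊆ T := by
  intro p hp
  apply hb
  rw [mem_ball, dist_eq_norm] at hp ⊢
  have h1 : p - (x - ε₀ • d) = (p - (x - ε • d)) + (ε₀ - ε) • d := by module
  calc ‖p - (x - ε₀ • d)‖ ≤ ‖p - (x - ε • d)‖ + ‖(ε₀ - ε) • d‖ := by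
        rw [h1]; exact norm_add_le _ _
    _ = ‖p - (x - ε • d)‖ + (ε₀ - ε) := by
        rw [norm_smul, Real.norm_eq_abs, abs_of_nonneg (by linarith), hd, mul_one]
    _ < ε₀ := by linarith

lemma ball_shrink_add (T : Set E) (x d : E) (hd : ‖d‖ = 1) {ε ε₀ : ℝ}
    (hε : 0 < ε) (hle : ε ≤ ε₀) (hb : ball (x + ε₀ • d) ε₀ ⊆ T) :
    ball (x + ε • d) ε ⊆ T := by
  have h1 : ∀ δ : ℝ, x + δ • d = x - δ • (-d) := by intro δ; module
  rw [h1] at *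
  exact ball_shrink_sub T x (-d) (by rwa [norm_neg]) hε hle hb

lemma orth_norm_sq (dv z : E) (τ : ℝ) (hdv : ‖dv‖ = 1) (hz : ⟪z, dv⟫ = 0) :
    ‖z + τ • dv‖^2 = ‖z‖^2 + τ^2 := by
  rw [norm_add_sq_real, real_inner_smul_right, hz, norm_smul, hdv]
  simp [mul_pow, sq_abs]

end

set_option maxHeartbeats 1000000 in
theorem stmt_18 {n : ℕ} (hn : 2 ≤ n) (Ω : Set (EuclideanSpace ℝ (Fin n)))
    (hΩ : IsOpen Ω) (hfr : (frontier Ω).Nonempty) (hcpt : IsCompact (frontier Ω))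
    (hgraph : ∀ x₀ ∈ frontier Ω,
      ∃ (dv : EuclideanSpace ℝ (Fin n)) (a r L : ℝ)
        (φ : EuclideanSpace ℝ (Fin n) → ℝ)
        (G : EuclideanSpace ℝ (Fin n) → EuclideanSpace ℝ (Fin n)),
        ‖dv‖ = 1 ∧ 0 < a ∧ 0 < r ∧ 0 < L ∧
        φ 0 = 0 ∧ G 0 = 0 ∧
        (∀ v : EuclideanSpace ℝ (Fin n), ⟪v, dv⟫ = 0 → ‖v‖ < r →
          (φ v ∈ Set.Ioo (-a) a ∧ ⟪G v, dv⟫ = 0 ∧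
            HasFDerivWithinAt φ (innerSL ℝ (G v))
              {w : EuclideanSpace ℝ (Fin n) | ⟪w, dv⟫ = 0} v ∧
            (∀ t ∈ Set.Ioo (-a) a,
              (x₀ + v + t • dv ∈ frontier Ω ↔ t = φ v) ∧
              (x₀ + v + t • dv ∈ Ω ↔ t < φ v)))) ∧
        (∀ v w : EuclideanSpace ℝ (Fin n), ⟪v, dv⟫ = 0 → ⟪w, dv⟫ = 0 →
          ‖v‖ < r → ‖w‖ < r →
          |φ v - φ w| ≤ L * ‖v - w‖ ∧ ‖G v - G w‖ ≤ L * ‖v - w‖)) :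
    ∃ ε : ℝ, 0 < ε ∧ ∀ x ∈ frontier Ω, ∃ dx : EuclideanSpace ℝ (Fin n), ‖dx‖ = 1 ∧
      ball (x - ε • dx) ε ⊆ Ω ∧ ball (x + ε • dx) ε ⊆ (closure Ω)ᶜ := by
  classical
  have hclos : closure Ω ⊆ Ω ∪ frontier Ω := by
    intro z hz
    by_cases hzΩ : z ∈ Ω
    · exact Or.inl hzΩ
    · right
      rw [frontier, hΩ.interior_eq]
      exact ⟨hz, hzΩ⟩
  have key : ∀ x₀ ∈ frontier Ω, ∃ ρ, 0 < ρ ∧ ∃ ε₀, 0 < ε₀ ∧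
      ∀ y ∈ frontier Ω, y ∈ ball x₀ ρ →
      ∃ d : EuclideanSpace ℝ (Fin n), ‖d‖ = 1 ∧
        ball (y - ε₀ • d) ε₀ ⊆ Ω ∧ ball (y + ε₀ • d) ε₀ ⊆ (closure Ω)ᶜ := by
    intro x₀ hx₀
    obtain ⟨dv, a, r, L, φ, G, hdv, ha, hr, hL, hφ0, hG0, hchart, hlip⟩ := hgraph x₀ hx₀
    refine ⟨min (r/4) (a/(2*(L+1))), by positivity,
      min (1/(2*L)) (min (r/5) (a/5)), by positivity, ?_⟩
    set ρ := min (r/4) (a/(2*(L+1))) with hρdef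
    set ε₀ := min (1/(2*L)) (min (r/5) (a/5)) with hεdef
    have hε₀pos : 0 < ε₀ := by positivity
    have hρr : ρ ≤ r/4 := min_le_left _ _
    have hρa : ρ ≤ a/(2*(L+1)) := min_le_right _ _
    have hε₀L : ε₀ ≤ 1/(2*L) := min_le_left _ _
    have hε₀r : ε₀ ≤ r/5 := le_trans (min_le_right _ _) (min_le_left _ _)
    have hε₀a : ε₀ ≤ a/5 := le_trans (min_le_right _ _) (min_le_right _ _)
    intro y hyfr hyball
    set tt := ⟪y - x₀, dv⟫ with httdef
    set v := y - x₀ - tt • dv with hvdef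
    have hvdv : ⟪v, dv⟫ = 0 := by
      rw [hvdef, inner_sub_left, real_inner_smul_left, real_inner_self_eq_norm_sq, hdv]
      ring
    have hy0 : y - x₀ = v + tt • dv := by rw [hvdef]; abel
    have hy_eq : y = x₀ + v + tt • dv := by rw [hvdef]; abel
    have hyx : ‖y - x₀‖ < ρ := by
      rw [← dist_eq_norm]; exact mem_ball.mp hyball
    have hnormsq : ‖v‖^2 + tt^2 = ‖y - x₀‖^2 := by
      rw [hy0, orth_norm_sq dv v tt hdv hvdv]
    have hρpos : (0:ℝ) < ρ := by positivity
    have hvρ : ‖v‖ < ρ := by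
      refine lt_of_pow_lt_pow_left₀ 2 hρpos.le ?_
      nlinarith [sq_nonneg tt, norm_nonneg (y - x₀)]
    have httρ : |tt| < ρ := by
      refine lt_of_pow_lt_pow_left₀ 2 hρpos.le ?_
      rw [sq_abs]
      nlinarith [sq_nonneg (‖v‖), norm_nonneg (y - x₀)]
    have hρltr : ρ < r := by nlinarith
    have hρlta : ρ < a := by
      have : a/(2*(L+1)) < a := by
        rw [div_lt_iff₀ (by positivity)]
        nlinarith
      linarith
    have hvr : ‖v‖ < r := lt_trans hvρ hρltr
    have httIoo : tt ∈ Set.Ioo (-a) a := by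
      rcases abs_lt.mp httρ with ⟨h1, h2⟩
      exact ⟨by linarith, by linarith⟩
    obtain ⟨hφIoo, hGdv, hder, hiff⟩ := hchart v hvdv hvr
    have htt : tt = φ v := ((hiff tt httIoo).1).mp (by rw [← hy_eq]; exact hyfr)
    -- conditions for local_ball
    have hc1 : 2*L*ε₀ ≤ 1 := by
      have h3 : 2*L*ε₀ ≤ 2*L*(1/(2*L)) := by
        apply mul_le_mul_of_nonneg_left hε₀L (by positivity)
      have h4 : 2*L*(1/(2*L)) = 1 := by field_simp
      linarith
    have hc2 : ‖v‖ + 2*ε₀ < r := by nlinarith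
    have hc3 : L*‖v‖ + 2*ε₀ < a := by
      have h5 : L*‖v‖ ≤ L*ρ := mul_le_mul_of_nonneg_left hvρ.le hL.le
      have h6 : L*ρ ≤ L*(a/(2*(L+1))) := mul_le_mul_of_nonneg_left hρa hL.le
      have h7 : L*(a/(2*(L+1))) ≤ a/2 := by
        rw [mul_comm, div_mul_eq_mul_div, div_le_div_iff₀ (by positivity) (by norm_num : (0:ℝ) < 2)]
        nlinarith
      nlinarith
    -- the unit direction
    have hs2 : ‖dv - G v‖^2 = 1 + ‖G v‖^2 := by
      rw [norm_sub_sq_real, hdv, real_inner_comm, hGdv]; ring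
    have hs1 : (1:ℝ) ≤ ‖dv - G v‖ := by
      nlinarith [norm_nonneg (dv - G v), norm_nonneg (G v)]
    have hspos : (0:ℝ) < ‖dv - G v‖ := by linarith
    set d := ‖dv - G v‖⁻¹ • (dv - G v) with hddef
    have hd1 : ‖d‖ = 1 := by
      rw [hddef, norm_smul, Real.norm_eq_abs, abs_of_nonneg (by positivity)]
      field_simp
    refine ⟨d, hd1, ?_, ?_⟩
    · -- interior ball
      have hmemΩ : ∀ w t, ⟪w, dv⟫ = 0 → ‖w‖ < r → t ∈ Set.Ioo (-a) a → t < φ w →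
          x₀ + w + t • dv ∈ Ω := by
        intro w t h1 h2 h3 h4
        exact (((hchart w h1 h2).2.2.2 t h3).2).mpr h4
      have hloc := local_ball Ω x₀ dv a r L ε₀ φ G hdv hL hφ0
        (fun z h1 h2 => (hchart z h1 h2).2.1)
        (fun z h1 h2 => (hchart z h1 h2).2.2.1)
        (fun z w h1 h2 h3 h4 => (hlip z w h1 h2 h3 h4).1)
        (fun z w h1 h2 h3 h4 => (hlip z w h1 h2 h3 h4).2)
        hmemΩ v hvdv hε₀pos hc1 hc2 hc3
      have hcen : y - ε₀ • d = x₀ + v + φ v • dv - ε₀ • (‖dv - G v‖⁻¹ • (dv - G v)) := by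
        rw [hy_eq, htt, hddef]
      rw [hcen]
      exact hloc
    · -- exterior ball
      have hsetneg : {w : EuclideanSpace ℝ (Fin n) | ⟪w, -dv⟫ = 0}
          = {w : EuclideanSpace ℝ (Fin n) | ⟪w, dv⟫ = 0} := by
        ext w; simp [inner_neg_right, neg_eq_zero]
      have hmemC : ∀ w t, ⟪w, -dv⟫ = 0 → ‖w‖ < r → t ∈ Set.Ioo (-a) a → t < -(φ w) →
          x₀ + w + t • (-dv) ∈ (closure Ω)ᶜ := by
        intro w t h1 h2 h3 h4
        have h1' : ⟪w, dv⟫ = 0 := by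
          rw [inner_neg_right, neg_eq_zero] at h1; exact h1
        have hpt : x₀ + w + t • (-dv) = x₀ + w + (-t) • dv := by module
        have h3' : (-t) ∈ Set.Ioo (-a) a := ⟨by linarith [h3.2], by linarith [h3.1]⟩
        obtain ⟨hfr_iff, hΩ_iff⟩ := (hchart w h1' h2).2.2.2 (-t) h3'
        rw [hpt]
        intro hcl
        rcases hclos hcl with hmem | hmem
        · have := hΩ_iff.mp hmem; linarith
        · have := hfr_iff.mp hmem; linarith
      have hloc := local_ball ((closure Ω)ᶜ) x₀ (-dv) a r L ε₀
        (fun z => -(φ z)) (fun z => -(G z)) (by rwa [norm_neg]) hL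
        (by show -(φ 0) = 0; rw [hφ0, neg_zero])
        (fun z h1 h2 => by
          rw [inner_neg_neg]
          rw [inner_neg_right, neg_eq_zero] at h1
          exact (hchart z h1 h2).2.1)
        (fun z h1 h2 => by
          rw [inner_neg_right, neg_eq_zero] at h1
          rw [hsetneg]
          show HasFDerivWithinAt (fun z => -(φ z)) (innerSL ℝ (-(G z)))
            {w : EuclideanSpace ℝ (Fin n) | ⟪w, dv⟫ = 0} z
          rw [map_neg]
          exact ((hchart z h1 h2).2.2.1).neg)
        (fun z w h1 h2 h3 h4 => by
          rw [inner_neg_right, neg_eq_zero] at h1 h2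
          have := (hlip z w h1 h2 h3 h4).1
          calc |-(φ z) - -(φ w)| = |φ z - φ w| := by rw [← abs_neg]; ring_nf
            _ ≤ L * ‖z - w‖ := this)
        (fun z w h1 h2 h3 h4 => by
          rw [inner_neg_right, neg_eq_zero] at h1 h2
          have := (hlip z w h1 h2 h3 h4).2
          calc ‖-(G z) - -(G w)‖ = ‖G z - G w‖ := by rw [neg_sub_neg, norm_sub_rev]
            _ ≤ L * ‖z - w‖ := this)
        hmemC v (by rw [inner_neg_right, hvdv, neg_zero]) hε₀pos hc1 hc2 hc3
      have hneg1 : -dv - -(G v) = -(dv - G v) := by module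
      have hcen : x₀ + v + (-(φ v)) • (-dv) - ε₀ • (‖-dv - -(G v)‖⁻¹ • (-dv - -(G v)))
          = y + ε₀ • d := by
        rw [hneg1, norm_neg, hy_eq, htt, hddef]
        module
      rw [hcen] at hloc
      exact hloc
  -- compactness
  choose! ρ hρpos ε₀f hε₀pos hballs using key
  have hcov : frontier Ω ⊆ ⋃ x ∈ frontier Ω, ball x (ρ x) := fun x hx =>
    Set.mem_biUnion hx (mem_ball_self (hρpos x hx))
  obtain ⟨F, hFsub, hFfin, hFcov⟩ :=
    hcpt.elim_finite_subcover_image (fun x _ => isOpen_ball) hcov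
  obtain ⟨y₀, hy₀⟩ := hfr
  obtain ⟨x₁, hx₁F, _⟩ := Set.mem_iUnion₂.mp (hFcov hy₀)
  have hFsne : hFfin.toFinset.Nonempty := ⟨x₁, hFfin.mem_toFinset.mpr hx₁F⟩
  set ε := hFfin.toFinset.inf' hFsne ε₀f with hεdef
  have hεpos : 0 < ε := by
    rw [hεdef, Finset.lt_inf'_iff]
    intro b hb
    exact hε₀pos b (hFsub (hFfin.mem_toFinset.mp hb))
  refine ⟨ε, hεpos, ?_⟩
  intro x hx
  obtain ⟨x₀, hx₀F, hxball⟩ := Set.mem_iUnion₂.mp (hFcov hx)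
  obtain ⟨d, hd, hbi, hbe⟩ := hballs x₀ (hFsub hx₀F) x hx hxball
  have hεle : ε ≤ ε₀f x₀ := Finset.inf'_le _ (hFfin.mem_toFinset.mpr hx₀F)
  exact ⟨d, hd, ball_shrink_sub Ω x d hd hεpos hεle hbi,
    ball_shrink_add ((closure Ω)ᶜ) x d hd hεpos hεle hbe⟩
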